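/- Let G=(V,E) be a digraph with V finite and nonempty, and let 𝓡(G) denote the subgraph of G induced by the root R(G). Then 𝓡(G) is irreducible (for every pair of vertices of R(G) there is a walk between them staying inside R(G)) if and only if the source of G^SCC is a singleton. -/

import Mathlib

/-- There is a walk of length exactly `n` from `v` to `w` in the digraph with edge relation `E`. -/
def HasWalkOfLength {V : Type*} (E : V → V → Prop) (v w : V) (n : ℕ) : Prop :=
  ∃ f : ℕ → V, f 0 = v ∧ f n = w ∧ ∀ i < n, E (f i) (f (i + 1))

/-- `v ⇝ w` : there is a walk (of some length, possibly `0`) from `v` to `w`. -/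
def Reaches {V : Type*} (E : V → V → Prop) : V → V → Prop :=
  Relation.ReflTransGen E

/-- The equivalence relation whose classes are the strongly connected components:
`v ∼ w` iff there are walks from `v` to `w` and from `w` to `v`. -/
def SCCSetoid {V : Type*} (E : V → V → Prop) : Setoid V where
  r v w := Reaches E v w ∧ Reaches E w v
  iseqv := ⟨fun _ => ⟨Relation.ReflTransGen.refl, Relation.ReflTransGen.refl⟩,
    fun h => ⟨h.2, h.1⟩,
    fun h h' => ⟨Relation.ReflTransGen.trans h.1 h'.1, Relation.ReflTransGen.trans h'.2 h.2⟩⟩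

/-- The edge relation of the quotient digraph `G^SCC` of strongly connected components :
`(P, Q)` is an edge iff `P ≠ Q` and there is an edge `(a, b) ∈ E` with `a ∈ P`, `b ∈ Q`. -/
def SCCEdge {V : Type*} (E : V → V → Prop) (P Q : Quotient (SCCSetoid E)) : Prop :=
  P ≠ Q ∧ ∃ a b : V, Quotient.mk (SCCSetoid E) a = P ∧ Quotient.mk (SCCSetoid E) b = Q ∧ E a b

/-- The root `R(G)`: the union of the strongly connected components having no
incoming edge in `G^SCC` (i.e. lying in the source of `G^SCC`). -/
def Root {V : Type*} (E : V → V → Prop) : Set V :=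
  {v | ∀ P, ¬ SCCEdge E P (Quotient.mk (SCCSetoid E) v)}

/-- `f` restricted to `{0,…,n}` is a cycle: a nonempty walk in which only the first and
last vertices are equal. -/
def IsCycle {V : Type*} (E : V → V → Prop) (f : ℕ → V) (n : ℕ) : Prop :=
  0 < n ∧ (∀ i < n, E (f i) (f (i + 1))) ∧ f 0 = f n ∧
    ∀ i j, i < j → j ≤ n → f i = f j → i = 0 ∧ j = n

/-- A digraph is aperiodic if no integer `k > 1` divides the length of every cycle. -/
def IsAperiodic {V : Type*} (E : V → V → Prop) : Prop :=
  ¬ ∃ k : ℕ, 1 < k ∧ ∀ (f : ℕ → V) (n : ℕ), IsCycle E f n → k ∣ n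

/-- A digraph is ergodic if it is nonempty, irreducible and aperiodic. -/
def IsErgodic {V : Type*} (E : V → V → Prop) : Prop :=
  Nonempty V ∧ (∀ v w : V, Reaches E v w) ∧ IsAperiodic E

lemma root_congr {V : Type*} {E : V → V → Prop} {a c : V}
    (h : (SCCSetoid E).r c a) (ha : a ∈ Root E) : c ∈ Root E := by
  intro P
  rw [show Quotient.mk (SCCSetoid E) c = Quotient.mk (SCCSetoid E) a from Quotient.sound h]
  exact ha P

lemma lift_walk {V : Type*} {E : V → V → Prop} {a b : V} (hb : b ∈ Root E)
    (hab : Reaches E a b) :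
    Reaches E b a → ∀ ha : a ∈ Root E,
      Reaches (fun x y : (Root E : Set V) => E x y) ⟨a, ha⟩ ⟨b, hb⟩ := by
  induction hab using Relation.ReflTransGen.head_induction_on with
  | refl => intro _ _; exact Relation.ReflTransGen.refl
  | head h hcb ih =>
    intro hba ha
    rename_i a c
    have hbc : Reaches E b c := hba.tail h
    have hc : c ∈ Root E :=
      root_congr ⟨hcb.trans hba, Relation.ReflTransGen.single h⟩ ha
    exact Relation.ReflTransGen.head (show E a c from h) (ih hbc hc)

/-- For a digraph `G = (V, E)` with `V` finite and nonempty, the root graph `𝓡(G)`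
(the subgraph induced by `R(G)`) is irreducible — i.e. any two of its vertices are joined
by a walk staying inside `R(G)` — if and only if the source of `G^SCC` is a singleton. -/
theorem stmt_9 {V : Type*} [Fintype V] [Nonempty V] (E : V → V → Prop) :
    (∀ a b : (Root E : Set V), Reaches (fun x y : (Root E : Set V) => E x y) a b) ↔
      (∃! P : Quotient (SCCSetoid E), ∀ Q, ¬ SCCEdge E Q P) := by
  constructor
  · intro hirr
    -- existence of a source via a minimal element
    have hwf : WellFounded (fun x y : V => Reaches E x y ∧ ¬ Reaches E y x) := by
      have : IsTrans V (fun x y : V => Reaches E x y ∧ ¬ Reaches E y x) := by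
        constructor
        rintro x y z ⟨hxy, hyx⟩ ⟨hyz, hzy⟩
        exact ⟨hxy.trans hyz, fun hzx => hzy (hzx.trans hxy)⟩
      have : IsIrrefl V (fun x y : V => Reaches E x y ∧ ¬ Reaches E y x) := by
        constructor; rintro x ⟨h1, h2⟩; exact h2 h1
      exact Finite.wellFounded_of_trans_of_irrefl _
    obtain ⟨m, -, hm⟩ := hwf.has_min Set.univ ⟨Classical.arbitrary V, trivial⟩
    have hmmin : ∀ x, Reaches E x m → Reaches E m x := by
      intro x hx
      by_contra h
      exact hm x trivial ⟨hx, h⟩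
    have hmroot : m ∈ Root E := by
      rintro P ⟨hne, a, b, hPa, hPb, hE⟩
      apply hne
      rw [← hPa]
      have hbm : (SCCSetoid E).r b m := Quotient.exact hPb
      have ham : Reaches E a m := (Relation.ReflTransGen.single hE).trans hbm.1
      exact Quotient.sound ⟨ham, hmmin a ham⟩
    -- uniqueness of sources via irreducibility
    have key : ∀ P Q : Quotient (SCCSetoid E),
        (∀ R, ¬ SCCEdge E R P) → (∀ R, ¬ SCCEdge E R Q) → P = Q := by
      intro P Q hP hQ
      obtain ⟨p, rfl⟩ := Quotient.exists_rep P
      obtain ⟨q, rfl⟩ := Quotient.exists_rep Q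
      have hp : p ∈ Root E := hP
      have hq : q ∈ Root E := hQ
      have h1 := hirr ⟨p, hp⟩ ⟨q, hq⟩
      have h2 := hirr ⟨q, hq⟩ ⟨p, hp⟩
      have l1 : Reaches E p q :=
        Relation.ReflTransGen.lift (Subtype.val) (fun _ _ h => h) _ _ h1
      have l2 : Reaches E q p :=
        Relation.ReflTransGen.lift (Subtype.val) (fun _ _ h => h) _ _ h2
      exact Quotient.sound ⟨l1, l2⟩
    exact ⟨Quotient.mk (SCCSetoid E) m, hmroot,
      fun Q hQ => key Q (Quotient.mk (SCCSetoid E) m) hQ hmroot⟩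
  · rintro ⟨P₀, hP₀, huniq⟩ ⟨a, ha⟩ ⟨b, hb⟩
    have hA : Quotient.mk (SCCSetoid E) a = P₀ := huniq _ ha
    have hB : Quotient.mk (SCCSetoid E) b = P₀ := huniq _ hb
    have hab : (SCCSetoid E).r a b := Quotient.exact (hA.trans hB.symm)
    exact lift_walk hb hab.1 hab.2 ha
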